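/- For x ∈ L^d lying in a Minkowski space (⟨x,x⟩_L = −1, x₀ > 0) and v a unit tangent vector at x⁰, setting c = ⟨x, x⁰+v⟩_L and u = (1+c)/(1−c), the point P̃^v(x) = ((1+u²)/(1−u²))·x⁰ + (2u/(1−u²))·v lies on the geodesic span(x⁰,v) ∩ L^d and satisfies B_v(P̃^v(x)) = B_v(x), where B_v(y) = log(−⟨y, x⁰+v⟩_L). -/
import Mathlib


open MeasureTheory

noncomputable def arcosh (x : ℝ) : ℝ := Real.log (x + Real.sqrt (x^2 - 1))

noncomputable def mink (d : ℕ) (x y : Fin (d+1) → ℝ) : ℝ :=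
  -(x 0 * y 0) + ∑ i : Fin d, x i.succ * y i.succ

def LorentzSet (d : ℕ) : Set (Fin (d+1) → ℝ) :=
  {x | mink d x x = -1 ∧ 0 < x 0}

noncomputable def dL (d : ℕ) (x y : Fin (d+1) → ℝ) : ℝ :=
  arcosh (-(mink d x y))

noncomputable def lorOrigin (d : ℕ) : Fin (d+1) → ℝ := fun i => if i = 0 then 1 else 0

/-- the horospherical projection point lies on the geodesic
`span(x⁰,v) ∩ L^d` and has the same Busemann value as `x`. -/
theorem horospherical_projection_on_geodesic_same_busemann (d : ℕ)
    (v : Fin (d+1) → ℝ) (hv0 : v 0 = 0) (hv : mink d v v = 1)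
    (x : Fin (d+1) → ℝ) (hx : x ∈ LorentzSet d) :
    let c := mink d x (fun i => lorOrigin d i + v i)
    let u := (1 + c) / (1 - c)
    let P : Fin (d+1) → ℝ :=
      fun i => ((1 + u^2) / (1 - u^2)) * lorOrigin d i + (2*u / (1 - u^2)) * v i
    (P ∈ Submodule.span ℝ {lorOrigin d, v} ∧ P ∈ LorentzSet d) ∧
      Real.log (-(mink d P (fun i => lorOrigin d i + v i))) =
        Real.log (-(mink d x (fun i => lorOrigin d i + v i))) := by
  obtain ⟨hxx, hx0⟩ := hx
  intro c u P
  have hSx : ∑ i : Fin d, x i.succ * x i.succ = x 0 * x 0 - 1 := by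
    unfold mink at hxx; linarith
  have hSv : ∑ i : Fin d, v i.succ * v i.succ = 1 := by
    unfold mink at hv; rw [hv0] at hv; linarith
  have hcs : (∑ i : Fin d, x i.succ * v i.succ) ^ 2 ≤
      (∑ i : Fin d, x i.succ ^ 2) * ∑ i : Fin d, v i.succ ^ 2 :=
    Finset.sum_mul_sq_le_sq_mul_sq _ _ _
  have hsq : ∀ y : Fin (d+1) → ℝ, ∑ i : Fin d, y i.succ ^ 2
      = ∑ i : Fin d, y i.succ * y i.succ := by
    intro y; exact Finset.sum_congr rfl fun i _ => sq (y i.succ)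
  have hc : c = -(x 0) + ∑ i : Fin d, x i.succ * v i.succ := by
    simp [c, mink, lorOrigin, hv0, Fin.succ_ne_zero]
  have hclt : c < 0 := by
    rw [hc]
    have h1 : (∑ i : Fin d, x i.succ * v i.succ) ^ 2 ≤ x 0 * x 0 - 1 := by
      rw [hsq x, hsq v, hSx, hSv] at hcs; linarith
    nlinarith [sq_nonneg (∑ i : Fin d, x i.succ * v i.succ)]
  have hu1 : u < 1 := by
    rw [show u = (1 + c) / (1 - c) from rfl, div_lt_one (by linarith)]; linarith
  have hu2 : -1 < u := by
    rw [show u = (1 + c) / (1 - c) from rfl, lt_div_iff₀ (by linarith)]; linarith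
  have h1u : (0:ℝ) < 1 - u ^ 2 := by nlinarith
  have hP0 : P 0 = (1 + u^2) / (1 - u^2) := by simp [P, lorOrigin, hv0]
  have hPs : ∀ i : Fin d, P i.succ = (2*u / (1 - u^2)) * v i.succ := by
    intro i; simp [P, lorOrigin, Fin.succ_ne_zero]
  have hc0 : c ≠ 0 := ne_of_lt hclt
  have h1c : (1:ℝ) - c ≠ 0 := by linarith
  have h1u' : (1:ℝ) - u^2 ≠ 0 := ne_of_gt h1u
  have hPc : mink d P (fun i => lorOrigin d i + v i) = c := by
    have key : mink d P (fun i => lorOrigin d i + v i)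
        = -((1 + u^2) / (1 - u^2)) + (2*u / (1 - u^2)) * ∑ i : Fin d, v i.succ * v i.succ := by
      unfold mink
      rw [hP0, Finset.mul_sum]
      congr 1
      · simp [lorOrigin, hv0]
      · exact Finset.sum_congr rfl fun i _ => by
          rw [hPs i]; simp [lorOrigin, Fin.succ_ne_zero]; ring
    rw [key, hSv, mul_one]
    have hu : u * (1 - c) = 1 + c := by
      rw [show u = (1 + c) / (1 - c) from rfl]; field_simp
    have step : -((1 + u^2) / (1 - u^2)) + 2*u / (1 - u^2) = (2*u - (1+u^2)) / (1 - u^2) := by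
      ring
    rw [step, div_eq_iff h1u']
    linear_combination (1 - u) * hu
  refine ⟨⟨?_, ?_, ?_⟩, by rw [hPc]⟩
  · have : P = ((1 + u^2) / (1 - u^2)) • lorOrigin d + (2*u / (1 - u^2)) • v := by
      funext i; simp [P]
    rw [this]
    exact Submodule.add_mem _
      (Submodule.smul_mem _ _ (Submodule.subset_span (Set.mem_insert _ _)))
      (Submodule.smul_mem _ _ (Submodule.subset_span (Set.mem_insert_of_mem _ rfl)))
  · unfold mink
    rw [hP0, Finset.sum_congr rfl fun i _ => by rw [hPs i]]
    rw [show ∑ i : Fin d, (2*u / (1 - u^2)) * v i.succ * ((2*u / (1 - u^2)) * v i.succ)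
        = (2*u / (1 - u^2))^2 * ∑ i : Fin d, v i.succ * v i.succ by
      rw [Finset.mul_sum]; exact Finset.sum_congr rfl fun i _ => by ring]
    rw [hSv]
    field_simp
    ring
  · rw [hP0]; positivity
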